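/- arXiv:2402.09296 — 4 statements merged into one kernel-verified Lean document; each statement's English description precedes it below -/
import Mathlib

section
/- For every natural number k and every complex number z, the probabilists' Hermite polynomial satisfies He_k(z) = i^k (2π)^{-1/2} e^{z²/2} ∫_{-∞}^{∞} e^{-t²/2} e^{-i·z·t} t^k dt, where the integral is with respect to Lebesgue measure on ℝ. -/
open MeasureTheory Finset Nat

open Polynomial in
lemma fact_two_mul (m : ℕ) : (2*m)! = 2^m * m ! * (2*m-1)‼ := by
  cases m with
  | zero => rfl
  | succ n =>
    have h : 2*(n+1) = (2*n+1) + 1 := by ring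
    rw [h, Nat.factorial_eq_mul_doubleFactorial]
    have h2 : (2*n+1+1) = 2*(n+1) := by ring
    rw [h2, Nat.doubleFactorial_two_mul]
    congr 1

lemma pow_le_fact_mul_exp {x : ℝ} (hx : 0 ≤ x) (k : ℕ) : x^k ≤ (k ! : ℝ) * Real.exp x := by
  have h1 : x^k / k ! ≤ Real.exp x := by
    calc x^k / k ! ≤ ∑ i ∈ Finset.range (k+1), x ^ i / i ! := by
          apply Finset.single_le_sum (f := fun i => x ^ i / i !) (fun i _ => by positivity)
          simp
      _ ≤ Real.exp x := Real.sum_le_exp_of_nonneg hx _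
  have : (0:ℝ) < k ! := by exact_mod_cast k.factorial_pos
  calc x ^ k = (x^k / k !) * k ! := by field_simp
    _ ≤ Real.exp x * k ! := by gcongr
    _ = (k ! : ℝ) * Real.exp x := by ring

open Polynomial in
lemma hermite_deriv (n : ℕ) :
    derivative (hermite (n+1)) = (n+1 : ℕ) • hermite n := by
  ext k
  rw [coeff_derivative, Polynomial.coeff_smul, coeff_hermite, coeff_hermite]
  have hpar : Even (n + 1 + (k + 1)) ↔ Even (n + k) := by
    constructor
    · rintro ⟨r, hr⟩; exact ⟨r-1, by omega⟩
    · rintro ⟨r, hr⟩; exact ⟨r+1, by omega⟩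
  split_ifs with h1 h2 h2
  · have e1 : n + 1 - (k+1) = n - k := by omega
    rw [e1]
    have hc : (((n+1).choose (k+1)) : ℤ) * (k+1) = (n+1) * n.choose k := by
      exact_mod_cast congrArg (Nat.cast (R := ℤ)) (Nat.add_one_mul_choose_eq n k).symm
    simp only [nsmul_eq_mul, Nat.cast_add, Nat.cast_one]
    linear_combination ((-1:ℤ)^((n-k)/2) * ((n-k-1)‼:ℤ)) * hc
  · exact absurd (hpar.mp h1) h2
  · exact absurd (hpar.mpr h2) h1
  · simp

/-- Probabilists' Hermite polynomial `He_k` evaluated at a complex argument. -/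
noncomputable def He (k : ℕ) (x : ℂ) : ℂ :=
  (k ! : ℂ) * ∑ m ∈ Finset.range (k / 2 + 1),
    (-1 : ℂ) ^ m * x ^ (k - 2 * m) / ((2 : ℂ) ^ m * (m ! : ℂ) * ((k - 2 * m)! : ℂ))

open Polynomial in
lemma He_eq (k : ℕ) (z : ℂ) : He k z = Polynomial.aeval z (hermite k) := by
  set c : ℕ → ℂ := fun i => (((hermite k).coeff i : ℤ) : ℂ) * z ^ i with hc
  have step1 : Polynomial.aeval z (hermite k) = ∑ i ∈ Finset.range (k+1), c i := by
    rw [aeval_def, Polynomial.eval₂_eq_sum_range, natDegree_hermite]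
    rfl
  have hinj : ∀ a ∈ Finset.range (k/2+1), ∀ b ∈ Finset.range (k/2+1),
      k - 2*a = k - 2*b → a = b := by
    intro a ha b hb hab
    simp only [Finset.mem_range] at ha hb
    omega
  have step2 : ∑ i ∈ Finset.image (fun m => k - 2*m) (Finset.range (k/2+1)), c i
      = ∑ m ∈ Finset.range (k/2+1), c (k - 2*m) := Finset.sum_image hinj
  have step3 : ∑ i ∈ Finset.image (fun m => k - 2*m) (Finset.range (k/2+1)), c i
      = ∑ i ∈ Finset.range (k+1), c i := by
    apply Finset.sum_subset
    · intro i hi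
      simp only [Finset.mem_image, Finset.mem_range] at hi ⊢
      omega
    · intro i hi hni
      simp only [Finset.mem_image, Finset.mem_range] at hi hni
      push_neg at hni
      have hodd : ¬ Even (k + i) := by
        intro hE
        rw [Nat.even_iff] at hE
        have := hni ((k - i)/2) (by omega)
        omega
      simp [hc, coeff_hermite, if_neg hodd]
  rw [step1, ← step3, step2, He, Finset.mul_sum]
  apply Finset.sum_congr rfl
  intro m hm
  simp only [Finset.mem_range] at hm
  have h2m : 2*m ≤ k := by omega
  have he : k - (k - 2*m) = 2*m := by omega
  have heven : Even (k + (k - 2*m)) := ⟨k - m, by omega⟩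
  simp only [hc, coeff_hermite, if_pos heven, he]
  have hd2 : (2*m)/2 = m := by omega
  rw [hd2]
  have hfact : (k ! : ℂ) = ((2*m-1)‼ : ℂ) * (k.choose (k - 2*m)) * ((2:ℂ)^m * (m ! : ℂ) * ((k-2*m)! : ℂ)) := by
    have h1 : k.choose (k-2*m) * (k-2*m)! * (2*m)! = k ! := by
      have := Nat.choose_mul_factorial_mul_factorial (Nat.sub_le k (2*m))
      rwa [he] at this
    have h2 := fact_two_mul m
    push_cast [← h1, h2]
    ring
  have hne : ((2:ℂ)^m * (m ! : ℂ) * ((k-2*m)! : ℂ)) ≠ 0 := by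
    exact mul_ne_zero (mul_ne_zero (pow_ne_zero _ two_ne_zero)
      (Nat.cast_ne_zero.2 m.factorial_ne_zero)) (Nat.cast_ne_zero.2 (k-2*m).factorial_ne_zero)
  have h1 : (m ! : ℂ) ≠ 0 := Nat.cast_ne_zero.2 m.factorial_ne_zero
  have h2 : ((k - 2*m)! : ℂ) ≠ 0 := Nat.cast_ne_zero.2 (k-2*m).factorial_ne_zero
  rw [hfact]
  push_cast
  field_simp

lemma key_integrable (z : ℂ) (k : ℕ) :
    Integrable (fun t : ℝ => Complex.exp (-(t:ℂ)^2/2 - Complex.I*z*(t:ℂ)) * (t:ℂ)^k) := by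
  have hg : Integrable (fun t : ℝ =>
      (Real.exp (z.im^2) * (8^k * (k ! : ℝ) + 1)) * Real.exp (-(1/8) * t^2)) :=
    (integrable_exp_neg_mul_sq (by norm_num)).const_mul _
  apply hg.mono'
  · apply Continuous.aestronglyMeasurable
    fun_prop
  · filter_upwards with t
    have hre : (-(t:ℂ)^2/2 - Complex.I*z*(t:ℂ)).re = -(t^2)/2 + z.im * t := by
      simp [Complex.div_re, Complex.sub_re, Complex.mul_re, Complex.I_re, Complex.I_im,
        ← Complex.ofReal_pow]
    rw [norm_mul, Complex.norm_exp, hre, norm_pow,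
      Complex.norm_real, Real.norm_eq_abs]
    have h1 : |t|^k ≤ (8^k * (k ! : ℝ) + 1) * Real.exp ((1/8) * t^2) := by
      rcases le_or_gt (|t|) 1 with h | h
      · have h0 : |t|^k ≤ 1 := pow_le_one₀ (abs_nonneg t) h
        have hE : 1 ≤ Real.exp ((1/8) * t^2) := Real.one_le_exp (by positivity)
        have hpos : (0:ℝ) ≤ 8^k * (k ! : ℝ) := by positivity
        calc |t|^k ≤ 1 := h0
          _ ≤ (8^k * (k ! : ℝ) + 1) * 1 := by nlinarith
          _ ≤ (8^k * (k ! : ℝ) + 1) * Real.exp ((1/8) * t^2) := by gcongr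
      · have h2 : |t|^k ≤ (t^2)^k := by
          calc |t|^k ≤ (|t|^2)^k := by
                apply pow_le_pow_left₀ (abs_nonneg t)
                nlinarith
            _ = (t^2)^k := by rw [_root_.sq_abs]
        have h3 : (t^2)^k ≤ 8^k * ((k ! : ℝ) * Real.exp ((1/8)*t^2)) := by
          have := pow_le_fact_mul_exp (x := (1/8) * t^2) (by positivity) k
          calc (t^2)^k = 8^k * ((1/8)*t^2)^k := by
                rw [mul_pow, ← mul_assoc, ← mul_pow]
                norm_num
            _ ≤ 8^k * ((k ! : ℝ) * Real.exp ((1/8)*t^2)) := by gcongr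
        have hexp : (0:ℝ) < Real.exp ((1/8)*t^2) := Real.exp_pos _
        nlinarith
    have h4 : Real.exp (-(t^2)/2 + z.im * t) ≤ Real.exp (z.im^2) * Real.exp (-(1/4) * t^2) := by
      rw [← Real.exp_add]
      apply Real.exp_le_exp.2
      nlinarith [sq_nonneg (t/2 - z.im)]
    calc Real.exp (-(t^2)/2 + z.im * t) * |t|^k
        ≤ (Real.exp (z.im^2) * Real.exp (-(1/4) * t^2)) * ((8^k * (k ! : ℝ) + 1) * Real.exp ((1/8) * t^2)) := by
          apply mul_le_mul h4 h1 (by positivity) (by positivity)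
      _ = (Real.exp (z.im^2) * (8^k * (k ! : ℝ) + 1)) * (Real.exp (-(1/4) * t^2) * Real.exp ((1/8) * t^2)) := by ring
      _ = (Real.exp (z.im^2) * (8^k * (k ! : ℝ) + 1)) * Real.exp (-(1/8) * t^2) := by
          rw [← Real.exp_add]; ring_nf

lemma F0 (z : ℂ) : ∫ t : ℝ, Complex.exp (-(t:ℂ)^2/2 - Complex.I*z*(t:ℂ)) * (t:ℂ)^0
    = ((Real.sqrt (2 * Real.pi) : ℝ) : ℂ) * Complex.exp (-z^2/2) := by
  have h : ∀ t : ℝ, Complex.exp (-(t:ℂ)^2/2 - Complex.I*z*(t:ℂ)) * (t:ℂ)^0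
      = Complex.exp ((-(1/2):ℂ) * (t:ℂ)^2 + (-Complex.I*z) * (t:ℂ) + 0) := by
    intro t; rw [pow_zero, mul_one]; congr 1; ring
  simp_rw [h]
  rw [integral_cexp_quadratic (by norm_num : (-(1/2):ℂ).re < 0)]
  have h1 : ((Real.pi : ℂ) / -(-(1/2))) = ((2 * Real.pi : ℝ) : ℂ) := by
    push_cast; ring
  rw [h1]
  have h2 : ((2 * Real.pi : ℝ) : ℂ) ^ (1/2 : ℂ) = ((Real.sqrt (2 * Real.pi) : ℝ) : ℂ) := by
    rw [Real.sqrt_eq_rpow, Complex.ofReal_cpow (by positivity : (0:ℝ) ≤ 2 * Real.pi)]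
    norm_num
  rw [h2]
  congr 1
  have : (-Complex.I * z)^2 = -z^2 := by
    rw [mul_pow]
    simp [Complex.I_sq]
  rw [this]
  ring

lemma Frec (z : ℂ) (n : ℕ) :
    ∫ t : ℝ, Complex.exp (-(t:ℂ)^2/2 - Complex.I*z*(t:ℂ)) * (t:ℂ)^(n+1)
    = (n:ℂ) * (∫ t : ℝ, Complex.exp (-(t:ℂ)^2/2 - Complex.I*z*(t:ℂ)) * (t:ℂ)^(n-1))
      - Complex.I * z * ∫ t : ℝ, Complex.exp (-(t:ℂ)^2/2 - Complex.I*z*(t:ℂ)) * (t:ℂ)^n := by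
  have hsplit : ∀ t : ℝ, Complex.exp (-(t:ℂ)^2/2 - Complex.I*z*(t:ℂ))
      = Complex.exp (-(t:ℂ)^2/2) * Complex.exp (-Complex.I*z*(t:ℂ)) := by
    intro t
    rw [← Complex.exp_add]
    congr 1
    ring
  set u : ℝ → ℂ := fun t => Complex.exp (-Complex.I*z*(t:ℂ)) * (t:ℂ)^n with hu
  set u' : ℝ → ℂ := fun t =>
    Complex.exp (-Complex.I*z*(t:ℂ)) * ((-Complex.I*z) * (t:ℂ)^n + n * (t:ℂ)^(n-1)) with hu'
  set v : ℝ → ℂ := fun t => Complex.exp (-(t:ℂ)^2/2) with hv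
  set v' : ℝ → ℂ := fun t => -(t:ℂ) * Complex.exp (-(t:ℂ)^2/2) with hv'
  have hderivu : ∀ t : ℝ, HasDerivAt u (u' t) t := by
    intro t
    have h1 : HasDerivAt (fun w : ℂ => Complex.exp (-Complex.I*z*w) * w^n)
        (Complex.exp (-Complex.I*z*(t:ℂ)) * ((-Complex.I*z) * (t:ℂ)^n + n * (t:ℂ)^(n-1))) (t:ℂ) := by
      have he : HasDerivAt (fun w : ℂ => Complex.exp (-Complex.I*z*w))
          ((-Complex.I*z) * Complex.exp (-Complex.I*z*(t:ℂ))) (t:ℂ) := by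
        simpa [mul_comm] using ((hasDerivAt_id (t:ℂ)).const_mul (-Complex.I*z)).cexp
      simpa [mul_comm, mul_assoc, mul_add, mul_left_comm] using he.fun_mul (hasDerivAt_pow n (t:ℂ))
    exact h1.comp_ofReal
  have hderivv : ∀ t : ℝ, HasDerivAt v (v' t) t := by
    intro t
    have h1 : HasDerivAt (fun w : ℂ => Complex.exp (-w^2/2))
        (-(t:ℂ) * Complex.exp (-(t:ℂ)^2/2)) (t:ℂ) := by
      have hq : HasDerivAt (fun w : ℂ => -w^2/2) (-(t:ℂ)) (t:ℂ) := by
        have h := ((hasDerivAt_pow 2 (t:ℂ)).neg).div_const 2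
        have he : -((2:ℕ) * (t:ℂ)^(2-1))/2 = -(t:ℂ) := by push_cast; ring
        rwa [he] at h
      simpa [mul_comm] using hq.cexp
    exact h1.comp_ofReal
  have hI : ∀ m : ℕ, Integrable (fun t : ℝ =>
      Complex.exp (-(t:ℂ)^2/2 - Complex.I*z*(t:ℂ)) * (t:ℂ)^m) := key_integrable z
  have huv'_eq : (u * v') = fun t : ℝ =>
      -(Complex.exp (-(t:ℂ)^2/2 - Complex.I*z*(t:ℂ)) * (t:ℂ)^(n+1)) := by
    funext t
    simp only [Pi.mul_apply, hu, hv']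
    rw [hsplit t, pow_succ]
    ring
  have hu'v_eq : (u' * v) = fun t : ℝ =>
      (-Complex.I*z) * (Complex.exp (-(t:ℂ)^2/2 - Complex.I*z*(t:ℂ)) * (t:ℂ)^n)
      + (n:ℂ) * (Complex.exp (-(t:ℂ)^2/2 - Complex.I*z*(t:ℂ)) * (t:ℂ)^(n-1)) := by
    funext t
    simp only [Pi.mul_apply, hu', hv]
    rw [hsplit t]
    ring
  have huv_eq : (u * v) = fun t : ℝ =>
      Complex.exp (-(t:ℂ)^2/2 - Complex.I*z*(t:ℂ)) * (t:ℂ)^n := by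
    funext t
    simp only [Pi.mul_apply, hu, hv]
    rw [hsplit t]
    ring
  have huv' : Integrable (u * v') := by rw [huv'_eq]; exact (hI (n+1)).neg
  have hu'v : Integrable (u' * v) := by
    rw [hu'v_eq]; exact ((hI n).const_mul _).add ((hI (n-1)).const_mul _)
  have huv : Integrable (u * v) := by rw [huv_eq]; exact hI n
  have ibp := integral_mul_deriv_eq_deriv_mul_of_integrable (fun t _ => hderivu t) (fun t _ => hderivv t) huv' hu'v huv
  have hL : ∫ t : ℝ, u t * v' t
      = -∫ t : ℝ, Complex.exp (-(t:ℂ)^2/2 - Complex.I*z*(t:ℂ)) * (t:ℂ)^(n+1) := by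
    rw [show (fun t : ℝ => u t * v' t) = u * v' from rfl, huv'_eq, integral_neg]
  have hR : ∫ t : ℝ, u' t * v t
      = (-Complex.I*z) * (∫ t : ℝ, Complex.exp (-(t:ℂ)^2/2 - Complex.I*z*(t:ℂ)) * (t:ℂ)^n)
      + (n:ℂ) * ∫ t : ℝ, Complex.exp (-(t:ℂ)^2/2 - Complex.I*z*(t:ℂ)) * (t:ℂ)^(n-1) := by
    rw [show (fun t : ℝ => u' t * v t) = u' * v from rfl, hu'v_eq,
      integral_add ((hI n).const_mul _) ((hI (n-1)).const_mul _),
      MeasureTheory.integral_const_mul, MeasureTheory.integral_const_mul]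
  rw [hL, hR] at ibp
  linear_combination -ibp

theorem hermite_fourier_integral_rep (k : ℕ) (z : ℂ) :
    He k z = Complex.I ^ k * ((Real.sqrt (2 * Real.pi) : ℝ) : ℂ)⁻¹ *
        Complex.exp (z ^ 2 / 2) *
      ∫ t : ℝ, (Real.exp (-(t ^ 2) / 2) : ℂ) *
        Complex.exp (-Complex.I * z * (t : ℂ)) * (t : ℂ) ^ k := by
  have hs0 : (0:ℝ) < Real.sqrt (2*Real.pi) := Real.sqrt_pos.2 (by positivity)
  have hsne : ((Real.sqrt (2*Real.pi) : ℝ) : ℂ) ≠ 0 := by exact_mod_cast hs0.ne'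
  have he1 : Complex.exp (z^2/2) * Complex.exp (-z^2/2) = 1 := by
    rw [← Complex.exp_add, show z^2/2 + -z^2/2 = 0 by ring, Complex.exp_zero]
  have hinteq : (∫ t : ℝ, (Real.exp (-(t ^ 2) / 2) : ℂ) *
        Complex.exp (-Complex.I * z * (t : ℂ)) * (t : ℂ) ^ k)
      = ∫ t : ℝ, Complex.exp (-(t:ℂ)^2/2 - Complex.I*z*(t:ℂ)) * (t:ℂ)^k := by
    congr 1
    funext t
    rw [Complex.ofReal_exp, ← Complex.exp_add]
    congr 2
    push_cast
    ring
  have key : ∀ m : ℕ, (Polynomial.aeval z) (Polynomial.hermite m)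
      = Complex.I ^ m * ((Real.sqrt (2 * Real.pi) : ℝ) : ℂ)⁻¹ * Complex.exp (z ^ 2 / 2) *
        ∫ t : ℝ, Complex.exp (-(t:ℂ)^2/2 - Complex.I*z*(t:ℂ)) * (t:ℂ)^m := by
    intro m
    induction m using Nat.strong_induction_on with
    | _ m ih =>
      rcases m with _ | m
      · -- m = 0
        rw [F0]
        simp only [Polynomial.hermite_zero, map_one, pow_zero, one_mul]
        rw [show ((Real.sqrt (2*Real.pi) : ℝ) : ℂ)⁻¹ * Complex.exp (z^2/2) *
            (((Real.sqrt (2*Real.pi) : ℝ) : ℂ) * Complex.exp (-z^2/2))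
          = (((Real.sqrt (2*Real.pi) : ℝ) : ℂ)⁻¹ * ((Real.sqrt (2*Real.pi) : ℝ) : ℂ)) *
            (Complex.exp (z^2/2) * Complex.exp (-z^2/2)) by ring,
          inv_mul_cancel₀ hsne, he1, one_mul]
      rcases m with _ | n
      · -- m = 1
        simp only [Nat.zero_add]
        simp only [Polynomial.hermite_one, Polynomial.aeval_X]
        have h1 : ∫ t : ℝ, Complex.exp (-(t:ℂ)^2/2 - Complex.I*z*(t:ℂ)) * (t:ℂ)^1
            = -(Complex.I * z * ∫ t : ℝ, Complex.exp (-(t:ℂ)^2/2 - Complex.I*z*(t:ℂ)) * (t:ℂ)^0) := by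
          simpa using Frec z 0
        rw [h1, F0]
        rw [show Complex.I^1 * ((Real.sqrt (2*Real.pi) : ℝ) : ℂ)⁻¹ * Complex.exp (z^2/2) *
            -(Complex.I * z * (((Real.sqrt (2*Real.pi) : ℝ) : ℂ) * Complex.exp (-z^2/2)))
          = (-(Complex.I*Complex.I)) * z * ((((Real.sqrt (2*Real.pi) : ℝ) : ℂ)⁻¹ *
              ((Real.sqrt (2*Real.pi) : ℝ) : ℂ)) * (Complex.exp (z^2/2) * Complex.exp (-z^2/2))) by ring,
          inv_mul_cancel₀ hsne, he1, Complex.I_mul_I]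
        ring
      · -- m = n + 2
        have h1 := ih (n+1) (by omega)
        have h0 := ih n (by omega)
        have hrec : ∫ t : ℝ, Complex.exp (-(t:ℂ)^2/2 - Complex.I*z*(t:ℂ)) * (t:ℂ)^(n+2)
            = ((n+1 : ℕ):ℂ) * (∫ t : ℝ, Complex.exp (-(t:ℂ)^2/2 - Complex.I*z*(t:ℂ)) * (t:ℂ)^n)
              - Complex.I * z * ∫ t : ℝ, Complex.exp (-(t:ℂ)^2/2 - Complex.I*z*(t:ℂ)) * (t:ℂ)^(n+1) := by
          simpa using Frec z (n+1)
        have hh : (Polynomial.aeval z) (Polynomial.hermite (n+2))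
            = z * (Polynomial.aeval z) (Polynomial.hermite (n+1))
              - ((n+1 : ℕ):ℂ) * (Polynomial.aeval z) (Polynomial.hermite n) := by
          rw [show n+2 = (n+1)+1 from rfl, Polynomial.hermite_succ, hermite_deriv]
          simp [nsmul_eq_mul]
        have hI2 : Complex.I^(n+2) = -Complex.I^n := by
          rw [pow_add, Complex.I_sq]
          ring
        rw [hh, h1, h0, hrec, hI2, pow_succ]
        push_cast
        ring
  rw [He_eq, hinteq, key k]
end

section
/- (Christoffel–Darboux formula for Hermite polynomials.) For every natural number k and all complex numbers x ≠ y, Σ_{m=0}^{k} He_m(x) He_m(y)/m! = (He_k(y) He_{k+1}(x) − He_k(x) He_{k+1}(y)) / (k! · (x − y)). -/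
open Finset Nat

namespace HermiteCD
open Polynomial

lemma dh (n : ℕ) : derivative (hermite (n+1)) = C ((n:ℤ)+1) * hermite n := by
  induction n with
  | zero => simp [hermite_one, hermite_zero]
  | succ n ih =>
    have hC : C (((n+1:ℕ):ℤ)+1) = C ((n:ℤ)+1) + 1 := by push_cast; simp [C_add]
    rw [hermite_succ (n+1), derivative_sub, derivative_mul, derivative_X, one_mul, ih,
      derivative_mul, derivative_C, zero_mul, zero_add, hermite_succ n, hC]
    ring

lemma hermite_rec (n : ℕ) :
    hermite (n+2) = X * hermite (n+1) - C ((n:ℤ)+1) * hermite n := by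
  rw [hermite_succ (n+1), dh]

lemma fac_two_mul (m : ℕ) : (2*m)! = 2^m * m ! * (2*m-1)‼ := by
  cases m with
  | zero => simp
  | succ m =>
    have h1 : 2*(m+1) = (2*m+1)+1 := by ring
    rw [h1, Nat.factorial_eq_mul_doubleFactorial]
    have h2 : 2*m+1+1 = 2*(m+1) := by ring
    rw [h2, Nat.doubleFactorial_two_mul]
    congr 1

lemma coeff_eq (n m : ℕ) (h : 2*m ≤ n) :
    (((hermite n).coeff (n - 2*m) : ℤ) : ℂ) =
      ((n)! : ℂ) * (-1:ℂ)^m / ((2:ℂ)^m * (m ! : ℂ) * ((n - 2*m)! : ℂ)) := by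
  have hn : n = 2*m + (n - 2*m) := by omega
  rw [show (hermite n).coeff (n-2*m) = (hermite (2*m + (n-2*m))).coeff (n-2*m) by rw [← hn]]
  rw [coeff_hermite_explicit, ← hn]
  have hnat : (2^m * m ! * (n - 2*m)!) * ((2*m-1)‼ * n.choose (n - 2*m)) = n ! := by
    rw [Nat.choose_symm h, ← Nat.choose_mul_factorial_mul_factorial h, fac_two_mul]
    ring
  have key : ((2:ℂ)^m * (m ! : ℂ) * ((n-2*m)! : ℂ)) * (((2*m-1)‼ : ℕ) : ℂ) *
      ((n.choose (n-2*m) : ℕ) : ℂ) = (n ! : ℂ) := by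
    push_cast [← hnat]; ring
  have hcc : ((n.choose (n - 2*m) : ℕ) : ℂ) = ((n.choose (2*m) : ℕ) : ℂ) := by
    rw [Nat.choose_symm h]
  rw [hcc] at key
  have hne : ((2:ℂ)^m * (m ! : ℂ) * ((n-2*m)! : ℂ)) ≠ 0 :=
    mul_ne_zero (mul_ne_zero (pow_ne_zero _ two_ne_zero)
      (Nat.cast_ne_zero.2 m.factorial_ne_zero)) (Nat.cast_ne_zero.2 (Nat.factorial_ne_zero _))
  rw [eq_div_iff hne]
  push_cast
  linear_combination ((-1:ℂ))^m * key + ((-1:ℂ))^m * (((2*m-1)‼ : ℕ) : ℂ) *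
    ((2:ℂ)^m * (m ! : ℂ) * ((n-2*m)! : ℂ)) * hcc

lemma He_eq (n : ℕ) (x : ℂ) : He n x = aeval x (hermite n) := by
  calc He n x
      = ∑ m ∈ Finset.range (n / 2 + 1), (n ! : ℂ) *
          ((-1 : ℂ) ^ m * x ^ (n - 2 * m) / ((2 : ℂ) ^ m * (m ! : ℂ) * ((n - 2 * m)! : ℂ))) := by
        rw [He, Finset.mul_sum]
    _ = ∑ k ∈ (Finset.range (n+1)).filter (fun k => Even (n + k)),
          (((hermite n).coeff k : ℤ) : ℂ) * x ^ k := by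
        refine Finset.sum_nbij' (i := fun m => n - 2*m) (j := fun k => (n - k)/2) ?_ ?_ ?_ ?_ ?_
        · intro m hm
          simp only [Finset.mem_range] at hm
          show n - 2*m ∈ _
          exact Finset.mem_filter.2 ⟨Finset.mem_range.2 (by omega), ⟨n - m, by omega⟩⟩
        · intro k hk
          simp only [Finset.mem_filter, Finset.mem_range] at hk
          show (n - k)/2 ∈ _
          exact Finset.mem_range.2 (by omega)
        · intro m hm
          simp only [Finset.mem_range] at hm
          show (n - (n - 2*m))/2 = m
          omega
        · intro k hk
          simp only [Finset.mem_filter, Finset.mem_range] at hk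
          obtain ⟨hk1, c, hc⟩ := hk
          show n - 2*((n - k)/2) = k
          omega
        · intro m hm
          simp only [Finset.mem_range] at hm
          show _ = (((hermite n).coeff (n - 2*m) : ℤ) : ℂ) * x ^ (n - 2*m)
          rw [coeff_eq n m (by omega)]
          ring
    _ = ∑ k ∈ Finset.range (n+1), (((hermite n).coeff k : ℤ) : ℂ) * x ^ k := by
        refine Finset.sum_filter_of_ne ?_
        intro k _ hne
        by_contra hodd
        exact hne (by rw [coeff_hermite_of_odd_add (Nat.not_even_iff_odd.1 hodd)]; simp)
    _ = aeval x (hermite n) := by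
        rw [Polynomial.aeval_eq_sum_range, natDegree_hermite]
        simp [zsmul_eq_mul]

lemma He_zero (x : ℂ) : He 0 x = 1 := by
  rw [He_eq, hermite_zero]; simp

lemma He_one (x : ℂ) : He 1 x = x := by
  rw [He_eq, hermite_one]; simp

lemma He_rec (n : ℕ) (x : ℂ) : He (n+2) x = x * He (n+1) x - ((n:ℂ)+1) * He n x := by
  rw [He_eq, He_eq, He_eq, hermite_rec]
  simp

end HermiteCD

/-- Christoffel–Darboux formula for the probabilists' Hermite polynomials. -/
theorem hermite_christoffel_darboux (k : ℕ) (x y : ℂ) (hxy : x ≠ y) :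
    ∑ m ∈ Finset.range (k + 1), He m x * He m y / (m ! : ℂ) =
      (He k y * He (k + 1) x - He k x * He (k + 1) y) / ((k ! : ℂ) * (x - y)) := by
  have hxy' : x - y ≠ 0 := sub_ne_zero.2 hxy
  induction k with
  | zero =>
    simp [HermiteCD.He_zero, HermiteCD.He_one]
    field_simp
  | succ k ih =>
    rw [Finset.sum_range_succ, ih]
    have hfk : ((k)! : ℂ) ≠ 0 := Nat.cast_ne_zero.2 k.factorial_ne_zero
    have hfk1 : (((k+1))! : ℂ) ≠ 0 := Nat.cast_ne_zero.2 (k+1).factorial_ne_zero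
    have hd1 : ((k)! : ℂ) * (x - y) ≠ 0 := mul_ne_zero hfk hxy'
    have hd2 : (((k+1))! : ℂ) * (x - y) ≠ 0 := mul_ne_zero hfk1 hxy'
    rw [HermiteCD.He_rec k x, HermiteCD.He_rec k y]
    have hfac : (((k+1))! : ℂ) = ((k:ℂ) + 1) * ((k)! : ℂ) := by
      push_cast [Nat.factorial_succ]; ring
    rw [div_add_div _ _ hd1 hfk1, div_eq_div_iff (mul_ne_zero hd1 hfk1) hd2]
    simp only [hfac]
    ring
end

section
/- Let n ≥ 1, let X be an n×n real matrix, let x, y be real numbers, set z = x + i·y, and let X_ℂ denote X viewed as a complex matrix (entrywise coercion). Then the real determinant det((x·1 − X)² + y²·1), viewed as a complex number, equals det(z·1 − X_ℂ) · det(z̄·1 − X_ℂᵀ), which equals the squared modulus |det(z·1 − X_ℂ)|²; moreover it equals the determinant of the 2n×2n complex block matrix with blocks [[0, i(z·1 − X_ℂ)], [i(z̄·1 − X_ℂᵀ), 0]]. -/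
open Matrix

lemma aux_det_swap_blocks (n : ℕ) :
    (Matrix.fromBlocks (0 : Matrix (Fin n) (Fin n) ℂ) (1 : Matrix (Fin n) (Fin n) ℂ)
      (1 : Matrix (Fin n) (Fin n) ℂ) (0 : Matrix (Fin n) (Fin n) ℂ)).det = (-1 : ℂ) ^ n := by
  have h : (Matrix.fromBlocks (0 : Matrix (Fin n) (Fin n) ℂ) (1 : Matrix (Fin n) (Fin n) ℂ)
        (1 : Matrix (Fin n) (Fin n) ℂ) (0 : Matrix (Fin n) (Fin n) ℂ)) *
      (Matrix.fromBlocks (1 : Matrix (Fin n) (Fin n) ℂ) (1 : Matrix (Fin n) (Fin n) ℂ)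
        (0 : Matrix (Fin n) (Fin n) ℂ) (1 : Matrix (Fin n) (Fin n) ℂ)) =
      Matrix.fromBlocks (0 : Matrix (Fin n) (Fin n) ℂ) (1 : Matrix (Fin n) (Fin n) ℂ)
        (1 : Matrix (Fin n) (Fin n) ℂ) (1 : Matrix (Fin n) (Fin n) ℂ) := by
    rw [Matrix.fromBlocks_multiply]
    simp
  have h2 := congrArg Matrix.det h
  rw [det_mul, det_fromBlocks_zero₂₁, det_one, one_mul, mul_one,
    det_fromBlocks_one₂₂] at h2
  simpa [Matrix.det_neg] using h2

lemma aux_mul_expand (n : ℕ) (M : Matrix (Fin n) (Fin n) ℂ) (a b : ℂ) :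
    (a • (1 : Matrix (Fin n) (Fin n) ℂ) - M) * (b • (1 : Matrix (Fin n) (Fin n) ℂ) - M) =
      (a * b) • (1 : Matrix (Fin n) (Fin n) ℂ) - (a + b) • M + M * M := by
  simp only [sub_mul, mul_sub, smul_mul_assoc, mul_smul_comm, one_mul, mul_one, smul_smul,
    add_smul]
  module

theorem det_real_quadratic_eq_complex_factorization
    (n : ℕ) (hn : 1 ≤ n) (X : Matrix (Fin n) (Fin n) ℝ) (x y : ℝ)
    (z : ℂ) (hz : z = (x : ℂ) + Complex.I * (y : ℂ))
    (Xc : Matrix (Fin n) (Fin n) ℂ) (hXc : Xc = X.map (fun a => (a : ℂ))) :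
    (((((x • (1 : Matrix (Fin n) (Fin n) ℝ) - X) ^ 2 +
        (y ^ 2) • (1 : Matrix (Fin n) (Fin n) ℝ)).det : ℝ) : ℂ) =
      (z • (1 : Matrix (Fin n) (Fin n) ℂ) - Xc).det *
        ((starRingEnd ℂ z) • (1 : Matrix (Fin n) (Fin n) ℂ) - Xcᵀ).det) ∧
    ((z • (1 : Matrix (Fin n) (Fin n) ℂ) - Xc).det *
        ((starRingEnd ℂ z) • (1 : Matrix (Fin n) (Fin n) ℂ) - Xcᵀ).det =
      ((‖(z • (1 : Matrix (Fin n) (Fin n) ℂ) - Xc).det‖) ^ 2 : ℝ)) ∧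
    ((z • (1 : Matrix (Fin n) (Fin n) ℂ) - Xc).det *
        ((starRingEnd ℂ z) • (1 : Matrix (Fin n) (Fin n) ℂ) - Xcᵀ).det =
      (Matrix.fromBlocks (0 : Matrix (Fin n) (Fin n) ℂ)
        (Complex.I • (z • (1 : Matrix (Fin n) (Fin n) ℂ) - Xc))
        (Complex.I • ((starRingEnd ℂ z) • (1 : Matrix (Fin n) (Fin n) ℂ) - Xcᵀ))
        (0 : Matrix (Fin n) (Fin n) ℂ)).det) := by
  set A : Matrix (Fin n) (Fin n) ℂ := z • 1 - Xc with hA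
  set B : Matrix (Fin n) (Fin n) ℂ := (starRingEnd ℂ z) • 1 - Xcᵀ with hB
  have hzc : (starRingEnd ℂ) z = (x : ℂ) - Complex.I * y := by
    rw [hz, _root_.map_add, _root_.map_mul, Complex.conj_I, Complex.conj_ofReal, Complex.conj_ofReal]
    ring
  have h1 : z * (starRingEnd ℂ) z = (x : ℂ) ^ 2 + (y : ℂ) ^ 2 := by
    rw [hzc, hz]
    linear_combination (-(y : ℂ) ^ 2) * Complex.I_sq
  have h2 : z + (starRingEnd ℂ) z = 2 * (x : ℂ) := by rw [hzc, hz]; ring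
  have hBt : B = ((starRingEnd ℂ z) • 1 - Xc)ᵀ := by
    rw [hB, transpose_sub, transpose_smul, transpose_one]
  have hdetB : B.det = ((starRingEnd ℂ z) • (1 : Matrix (Fin n) (Fin n) ℂ) - Xc).det := by
    rw [hBt, det_transpose]
  have hconjA : A.map (starRingEnd ℂ) = (starRingEnd ℂ z) • 1 - Xc := by
    ext i j
    simp [hA, hXc, Matrix.one_apply, apply_ite (starRingEnd ℂ)]
  have hdetBconj : B.det = (starRingEnd ℂ) A.det := by
    have := (starRingEnd ℂ).map_det A
    rw [RingHom.mapMatrix_apply, hconjA] at this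
    rw [hdetB, ← this]
  have key2 : A * ((starRingEnd ℂ z) • 1 - Xc) =
      ((x : ℂ) • (1 : Matrix (Fin n) (Fin n) ℂ) - Xc) ^ 2 + ((y : ℂ) ^ 2) • 1 := by
    rw [hA, aux_mul_expand, sq, aux_mul_expand, h1, h2]
    module
  refine ⟨?_, ?_, ?_⟩
  · -- part 1
    have hmap : ((x • (1 : Matrix (Fin n) (Fin n) ℝ) - X) ^ 2 +
        (y ^ 2) • (1 : Matrix (Fin n) (Fin n) ℝ)).map (fun a => (a : ℂ)) =
        ((x : ℂ) • (1 : Matrix (Fin n) (Fin n) ℂ) - Xc) ^ 2 + ((y : ℂ) ^ 2) • 1 := by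
      ext i j
      simp only [sq, Matrix.map_apply, Matrix.add_apply, Matrix.mul_apply, Matrix.sub_apply,
        Matrix.smul_apply, Matrix.one_apply, hXc, smul_eq_mul, mul_ite, ite_mul,
        mul_one, mul_zero, zero_mul, one_mul]
      push_cast [apply_ite ((↑) : ℝ → ℂ)]
      ring_nf
    have hcast : (((((x • (1 : Matrix (Fin n) (Fin n) ℝ) - X) ^ 2 +
        (y ^ 2) • (1 : Matrix (Fin n) (Fin n) ℝ)).det : ℝ)) : ℂ) =
        (algebraMap ℝ ℂ) (((x • (1 : Matrix (Fin n) (Fin n) ℝ) - X) ^ 2 +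
        (y ^ 2) • (1 : Matrix (Fin n) (Fin n) ℝ)).det) := rfl
    rw [hcast, RingHom.map_det, RingHom.mapMatrix_apply]
    have hfun : (((x • (1 : Matrix (Fin n) (Fin n) ℝ) - X) ^ 2 +
        (y ^ 2) • (1 : Matrix (Fin n) (Fin n) ℝ)).map ⇑(algebraMap ℝ ℂ)) =
        ((x • (1 : Matrix (Fin n) (Fin n) ℝ) - X) ^ 2 +
        (y ^ 2) • (1 : Matrix (Fin n) (Fin n) ℝ)).map (fun a => (a : ℂ)) := rfl
    rw [hfun, hmap, ← key2, det_mul, hdetB]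
  · -- part 2
    rw [hdetBconj, Complex.mul_conj, Complex.normSq_eq_norm_sq]
  · -- part 3
    have hsplit : Matrix.fromBlocks (0 : Matrix (Fin n) (Fin n) ℂ)
        (Complex.I • A) (Complex.I • B) (0 : Matrix (Fin n) (Fin n) ℂ) =
        (Matrix.fromBlocks (0 : Matrix (Fin n) (Fin n) ℂ) (1 : Matrix (Fin n) (Fin n) ℂ)
          (1 : Matrix (Fin n) (Fin n) ℂ) (0 : Matrix (Fin n) (Fin n) ℂ)) *
          (Matrix.fromBlocks (Complex.I • B) (0 : Matrix (Fin n) (Fin n) ℂ)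
            (0 : Matrix (Fin n) (Fin n) ℂ) (Complex.I • A)) := by
      rw [Matrix.fromBlocks_multiply]
      simp
    rw [hsplit, det_mul, aux_det_swap_blocks, det_fromBlocks_zero₂₁, det_smul, det_smul,
      Fintype.card_fin]
    have hI : ((-1 : ℂ)) ^ n * (Complex.I ^ n * Complex.I ^ n) = 1 := by
      rw [← mul_pow, ← mul_pow, Complex.I_mul_I]
      norm_num
    linear_combination (-(A.det * B.det)) * hI
end

section
/- Fix a natural number M. For integers N > M and real x, define Θ_N^{(M)}(x) = Γ(N−M+1, N·x) / Γ(N−M+1), where Γ(s, a) = ∫_a^∞ u^{s−1} e^{−u} du for real a and Γ(s) = Γ(s, 0). Then: (i) for every x with 0 ≤ x < 1, Θ_N^{(M)}(x) → 1 as N → ∞; and (ii) for every x > 1, Θ_N^{(M)}(x) → 0 as N → ∞. -/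
open MeasureTheory Filter Nat

namespace ThetaAux

open Set Real

lemma integrableOn_pow_mul_exp (n : ℕ) :
    IntegrableOn (fun u : ℝ => u ^ n * Real.exp (-u)) (Set.Ioi 0) := by
  have h := Real.GammaIntegral_convergent (s := (n : ℝ) + 1) (by positivity)
  refine h.congr_fun ?_ measurableSet_Ioi
  intro x hx
  dsimp only
  rw [show ((n : ℝ) + 1 - 1) = (n : ℝ) by ring, Real.rpow_natCast, mul_comm]

lemma integral_pow_mul_exp (n : ℕ) :
    ∫ u in Set.Ioi (0 : ℝ), u ^ n * Real.exp (-u) = (n ! : ℝ) := by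
  have h1 : Real.Gamma ((n : ℝ) + 1) = ∫ x in Ioi (0:ℝ), Real.exp (-x) * x ^ ((n : ℝ) + 1 - 1) :=
    Real.Gamma_eq_integral (by positivity)
  rw [Real.Gamma_nat_eq_factorial] at h1
  rw [show (∫ u in Set.Ioi (0:ℝ), u ^ n * Real.exp (-u))
      = ∫ x in Ioi (0:ℝ), Real.exp (-x) * x ^ ((n : ℝ) + 1 - 1) from
    setIntegral_congr_fun measurableSet_Ioi (fun x hx => by
      rw [show ((n : ℝ) + 1 - 1) = (n : ℝ) by ring, Real.rpow_natCast, mul_comm]), ← h1]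

lemma pow_le_factorial_mul_exp (n : ℕ) : (n : ℝ) ^ n ≤ (n ! : ℝ) * Real.exp n := by
  have h := Real.sum_le_exp_of_nonneg (x := (n : ℝ)) (by positivity) (n + 1)
  have h2 : (n : ℝ) ^ n / (n ! : ℝ) ≤ Real.exp n := by
    refine le_trans ?_ h
    refine Finset.single_le_sum (f := fun i => (n : ℝ) ^ i / (i ! : ℝ)) ?_ ?_
    · intro i _; positivity
    · exact Finset.self_mem_range_succ n
  have hfac : (0 : ℝ) < (n ! : ℝ) := by positivity
  calc (n : ℝ) ^ n = (n : ℝ) ^ n / (n ! : ℝ) * (n ! : ℝ) := by field_simp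
    _ ≤ Real.exp n * (n ! : ℝ) := by gcongr
    _ = (n ! : ℝ) * Real.exp n := mul_comm _ _

/-- `v^n e^{-v} ≤ (n/e)^n` for `v ≥ 0`. -/
lemma pow_mul_exp_neg_le (n : ℕ) {v : ℝ} (hv : 0 ≤ v) :
    v ^ n * Real.exp (-v) ≤ ((n : ℝ) / Real.exp 1) ^ n := by
  rcases Nat.eq_zero_or_pos n with rfl | hn
  · simpa using Real.exp_le_one_iff.mpr (by linarith : -v ≤ 0)
  · have hn' : (0 : ℝ) < n := by exact_mod_cast hn
    have key : v ≤ (n : ℝ) / Real.exp 1 * Real.exp (v / n) := by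
      have h := Real.add_one_le_exp (v / n - 1)
      have h1 : v / n ≤ Real.exp (v / n - 1) := by linarith
      have h2 : Real.exp (v / n - 1) = Real.exp (v / n) / Real.exp 1 := by
        rw [Real.exp_sub]
      rw [h2] at h1
      have h3 := mul_le_mul_of_nonneg_left h1 hn'.le
      calc v = (n : ℝ) * (v / n) := by field_simp
        _ ≤ (n : ℝ) * (Real.exp (v / n) / Real.exp 1) := h3
        _ = (n : ℝ) / Real.exp 1 * Real.exp (v / n) := by ring
    have hpow : v ^ n ≤ ((n : ℝ) / Real.exp 1 * Real.exp (v / n)) ^ n :=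
      pow_le_pow_left₀ hv key n
    have hexp : (Real.exp (v / n)) ^ n = Real.exp v := by
      rw [← Real.exp_nat_mul]
      congr 1; field_simp
    rw [mul_pow, hexp] at hpow
    have h4 := mul_le_mul_of_nonneg_right hpow (Real.exp_pos (-v)).le
    calc v ^ n * Real.exp (-v) ≤ ((n : ℝ) / Real.exp 1) ^ n * Real.exp v * Real.exp (-v) := h4
      _ = ((n : ℝ) / Real.exp 1) ^ n := by rw [mul_assoc, ← Real.exp_add]; simp

/-- `u^n e^{-u}` is monotone on `[0, n]`. -/
lemma pow_mul_exp_mono {n : ℕ} {u a : ℝ} (hu : 0 ≤ u) (hua : u ≤ a) (han : a ≤ n) :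
    u ^ n * Real.exp (-u) ≤ a ^ n * Real.exp (-a) := by
  rcases eq_or_lt_of_le (hu.trans hua) with ha | ha
  · have : u = 0 := le_antisymm (ha ▸ hua) hu
    subst this; rw [← ha]
  · have hn' : (0 : ℝ) < n := lt_of_lt_of_le ha han
    have key : u ≤ a * Real.exp ((u - a) / n) := by
      have h := Real.add_one_le_exp ((u - a) / n)
      have h2 : a * ((u - a) / n + 1) ≤ a * Real.exp ((u - a) / n) :=
        mul_le_mul_of_nonneg_left h ha.le
      refine le_trans ?_ h2
      rw [← sub_nonneg]
      have he : a * ((u - a) / n + 1) - u = (a - u) * ((n : ℝ) - a) / n := by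
        field_simp; ring
      rw [he]
      have hx1 : 0 ≤ a - u := by linarith
      have hx2 : 0 ≤ (n : ℝ) - a := by linarith
      positivity
    have hpow : u ^ n ≤ (a * Real.exp ((u - a) / n)) ^ n := pow_le_pow_left₀ hu key n
    have hexp : (Real.exp ((u - a) / n)) ^ n = Real.exp (u - a) := by
      rw [← Real.exp_nat_mul]; congr 1; field_simp
    rw [mul_pow, hexp] at hpow
    have h4 := mul_le_mul_of_nonneg_right hpow (Real.exp_pos (-u)).le
    calc u ^ n * Real.exp (-u) ≤ a ^ n * Real.exp (u - a) * Real.exp (-u) := h4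
      _ = a ^ n * Real.exp (-a) := by rw [mul_assoc, ← Real.exp_add]; congr 2; ring

lemma integral_exp_neg_mul_Ioi {b : ℝ} (hb : 0 < b) (a : ℝ) :
    ∫ u in Set.Ioi a, Real.exp (-(b * u)) = Real.exp (-(b * a)) / b := by
  have hderiv : ∀ x ∈ Set.Ici a, HasDerivAt (fun u : ℝ => -Real.exp (-(b * u)) / b)
      (Real.exp (-(b * x))) x := by
    intro x _
    have h : HasDerivAt (fun u : ℝ => -(b * u)) (-b) x := by
      simpa using ((hasDerivAt_id x).const_mul (-b))
    have h2 := (h.exp.const_mul (-1 / b))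
    convert h2 using 1
    · rfl
    · rfl
    · ext u; ring
    · field_simp
  have hint : IntegrableOn (fun u : ℝ => Real.exp (-(b * u))) (Set.Ioi a) := by
    simpa [neg_mul] using exp_neg_integrableOn_Ioi a hb
  have h1 : Tendsto (fun u : ℝ => b * u) atTop atTop :=
    Tendsto.const_mul_atTop hb tendsto_id
  have htend : Tendsto (fun u : ℝ => -Real.exp (-(b * u)) / b) atTop (nhds 0) := by
    have h2 : Tendsto (fun u : ℝ => Real.exp (-(b * u))) atTop (nhds 0) :=
      Real.tendsto_exp_atBot.comp (tendsto_neg_atTop_atBot.comp h1)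
    simpa using h2.neg.div_const b
  have := integral_Ioi_of_hasDerivAt_of_tendsto' hderiv hint htend
  rw [this]; ring

end ThetaAux

lemma ThetaAux.split (n : ℕ) {a : ℝ} (ha : 0 ≤ a) :
    ∫ u in Set.Ioi a, u ^ n * Real.exp (-u)
      = ((n)! : ℝ) - ∫ u in Set.Ioc 0 a, u ^ n * Real.exp (-u) := by
  have h1 : MeasureTheory.IntegrableOn (fun u : ℝ => u ^ n * Real.exp (-u)) (Set.Ioc 0 a) :=
    (ThetaAux.integrableOn_pow_mul_exp n).mono_set Set.Ioc_subset_Ioi_self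
  have h2 : MeasureTheory.IntegrableOn (fun u : ℝ => u ^ n * Real.exp (-u)) (Set.Ioi a) :=
    (ThetaAux.integrableOn_pow_mul_exp n).mono_set (Set.Ioi_subset_Ioi ha)
  have h3 := MeasureTheory.setIntegral_union (Set.Ioc_disjoint_Ioi le_rfl)
    measurableSet_Ioi h1 h2
  rw [Set.Ioc_union_Ioi_eq_Ioi ha, ThetaAux.integral_pow_mul_exp n] at h3
  linarith

lemma ThetaAux.self_mul_exp_mono {s y : ℝ} (hs : 0 ≤ s) (hsy : s ≤ y) (hy : y ≤ 1) :
    s * Real.exp (1 - s) ≤ y * Real.exp (1 - y) := by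
  have h := Real.add_one_le_exp (s - y)
  have hy0 : 0 ≤ y := hs.trans hsy
  have h2 : y * ((s - y) + 1) ≤ y * Real.exp (s - y) := mul_le_mul_of_nonneg_left h hy0
  have h3 : s ≤ y * Real.exp (s - y) := by nlinarith
  have h4 := mul_le_mul_of_nonneg_right h3 (Real.exp_pos (1 - s)).le
  calc s * Real.exp (1 - s) ≤ y * Real.exp (s - y) * Real.exp (1 - s) := h4
    _ = y * Real.exp (1 - y) := by rw [mul_assoc, ← Real.exp_add]; congr 2; ring

/-- `Θ_N^{(M)}(x) = Γ(N−M+1, N·x)/Γ(N−M+1)`, with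
`Γ(N−M+1, a) = ∫_a^∞ u^{N−M} e^{−u} du` the upper incomplete gamma function (extended to
any real lower limit `a`) and `Γ(N−M+1) = (N−M)!`. -/
noncomputable def ThetaNM (M N : ℕ) (x : ℝ) : ℝ :=
  (∫ u in Set.Ioi ((N : ℝ) * x), u ^ (N - M) * Real.exp (-u)) / ((N - M)! : ℝ)

theorem thetaNM_tendsto (M : ℕ) :
    (∀ x : ℝ, 0 ≤ x → x < 1 →
        Tendsto (fun N : ℕ => ThetaNM M N x) atTop (nhds 1)) ∧
      (∀ x : ℝ, 1 < x →
        Tendsto (fun N : ℕ => ThetaNM M N x) atTop (nhds 0)) := by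
  constructor
  · -- `0 ≤ x < 1`
    intro x hx0 hx1
    set y : ℝ := (x + 1) / 2 with hy
    have hxy : x < y := by rw [hy]; linarith
    have hy0 : 0 < y := by rw [hy]; linarith
    have hy1 : y < 1 := by rw [hy]; linarith
    set r : ℝ := y * Real.exp (1 - y) with hr
    have hr0 : 0 < r := by rw [hr]; positivity
    have hr1 : r < 1 := by
      have h2 : y < Real.exp (y - 1) := by
        have h := Real.add_one_lt_exp (x := y - 1) (by intro h; rw [sub_eq_zero] at h; linarith)
        linarith
      calc r = y * Real.exp (1 - y) := hr
        _ < Real.exp (y - 1) * Real.exp (1 - y) := mul_lt_mul_of_pos_right h2 (Real.exp_pos _)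
        _ = 1 := by rw [← Real.exp_add]; norm_num
    have hkey : ∀ N : ℕ, ThetaNM M N x
        = 1 - (∫ u in Set.Ioc (0:ℝ) ((N:ℝ)*x), u ^ (N - M) * Real.exp (-u))
            / (((N - M))! : ℝ) := by
      intro N
      have ha : (0:ℝ) ≤ (N:ℝ) * x := by positivity
      have hfac : (0:ℝ) < (((N - M))! : ℝ) := by positivity
      rw [ThetaNM, ThetaAux.split (N - M) ha]
      field_simp
    rw [show (1:ℝ) = 1 - 0 by ring]
    refine Tendsto.congr (fun N => (hkey N).symm) (Tendsto.const_sub 1 ?_)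
    refine squeeze_zero'
      (g := fun N : ℕ => (N:ℝ) * x * r ^ (N - M)) ?_ ?_ ?_
    · filter_upwards with N
      apply div_nonneg ?_ (by positivity)
      apply MeasureTheory.setIntegral_nonneg measurableSet_Ioc
      intro u hu
      have h0u : 0 ≤ u := le_of_lt hu.1
      positivity
    · have hev1 : ∀ᶠ N : ℕ in atTop, M + 1 ≤ N := eventually_ge_atTop (M + 1)
      have hev2 : ∀ᶠ N : ℕ in atTop, y * M ≤ (N:ℝ) * (y - x) := by
        have ht : Tendsto (fun N : ℕ => (N:ℝ) * (y - x)) atTop atTop :=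
          Tendsto.atTop_mul_const (by linarith) tendsto_natCast_atTop_atTop
        exact ht.eventually_ge_atTop (y * M)
      filter_upwards [hev1, hev2] with N hN1 hN2
      set n : ℕ := N - M with hn
      set a : ℝ := (N:ℝ) * x with hadef
      have hMN : M ≤ N := by omega
      have hn1 : 1 ≤ n := by omega
      have hncast : (n : ℝ) = (N:ℝ) - (M:ℝ) := by
        rw [hn]; push_cast [hMN]; ring
      have hn0 : (0:ℝ) < n := by exact_mod_cast hn1
      have ha0 : 0 ≤ a := by rw [hadef]; positivity
      have hay : a ≤ y * n := by rw [hadef, hncast]; nlinarith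
      have han : a ≤ (n:ℝ) := by nlinarith
      have hJ : (∫ u in Set.Ioc (0:ℝ) a, u ^ n * Real.exp (-u))
          ≤ a * (a ^ n * Real.exp (-a)) := by
        have hint : MeasureTheory.IntegrableOn (fun u : ℝ => u ^ n * Real.exp (-u))
            (Set.Ioc 0 a) :=
          (ThetaAux.integrableOn_pow_mul_exp n).mono_set Set.Ioc_subset_Ioi_self
        have hmono := MeasureTheory.setIntegral_mono_on hint
          ((MeasureTheory.integrableOn_const_iff (C := a ^ n * Real.exp (-a))).mpr (Or.inr measure_Ioc_lt_top))
          measurableSet_Ioc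
          (fun u hu => ThetaAux.pow_mul_exp_mono hu.1.le hu.2 han)
        refine hmono.trans_eq ?_
        rw [MeasureTheory.setIntegral_const, Real.volume_real_Ioc_of_le ha0, smul_eq_mul]
        ring
      clear_value n a
      have hfac : (0:ℝ) < ((n)! : ℝ) := by positivity
      have hnpow : (0:ℝ) < (n:ℝ) ^ n := pow_pos hn0 n
      have hfacinv : (1:ℝ) / ((n)! : ℝ) ≤ Real.exp n / (n:ℝ) ^ n := by
        rw [div_le_div_iff₀ hfac hnpow]
        have := ThetaAux.pow_le_factorial_mul_exp n
        nlinarith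
      have hJnn : (0:ℝ) ≤ a * (a ^ n * Real.exp (-a)) := by positivity
      have h1 : (∫ u in Set.Ioc (0:ℝ) a, u ^ n * Real.exp (-u)) / ((n)! : ℝ)
          ≤ a * (a ^ n * Real.exp (-a)) * (Real.exp n / (n:ℝ) ^ n) := by
        calc (∫ u in Set.Ioc (0:ℝ) a, u ^ n * Real.exp (-u)) / ((n)! : ℝ)
            ≤ a * (a ^ n * Real.exp (-a)) / ((n)! : ℝ) := by gcongr
          _ = a * (a ^ n * Real.exp (-a)) * (1 / ((n)! : ℝ)) := by ring
          _ ≤ a * (a ^ n * Real.exp (-a)) * (Real.exp n / (n:ℝ) ^ n) :=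
              mul_le_mul_of_nonneg_left hfacinv hJnn
      refine h1.trans ?_
      have heq : a * (a ^ n * Real.exp (-a)) * (Real.exp n / (n:ℝ) ^ n)
          = a * ((a / n) * Real.exp (1 - a / n)) ^ n := by
        rw [mul_pow, div_pow, ← Real.exp_nat_mul]
        have hh : (n:ℝ) * (1 - a / n) = (n:ℝ) - a := by field_simp
        rw [hh, Real.exp_sub]
        have hee : Real.exp (-a) * Real.exp a = 1 := by rw [← Real.exp_add]; simp
        field_simp [hn0.ne']
        linear_combination (a * a ^ n) * hee
      rw [heq, hr]
      have hs0 : 0 ≤ a / n := by positivity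
      have hsy : a / n ≤ y := by rw [div_le_iff₀ hn0]; linarith [hay]
      have hmono2 := ThetaAux.self_mul_exp_mono hs0 hsy hy1.le
      have hgnn : 0 ≤ (a / n) * Real.exp (1 - a / n) :=
        mul_nonneg hs0 (Real.exp_pos _).le
      gcongr
    · have h1 : Tendsto (fun N : ℕ => ((N:ℝ)) ^ 1 * r ^ N) atTop (nhds 0) :=
        tendsto_pow_const_mul_const_pow_of_lt_one 1 hr0.le hr1
      have h2 : Tendsto (fun N : ℕ => (x / r ^ M) * ((N:ℝ) ^ 1 * r ^ N)) atTop (nhds 0) := by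
        simpa using h1.const_mul (x / r ^ M)
      refine h2.congr' ?_
      filter_upwards [eventually_ge_atTop M] with N hMN
      have hpow : r ^ (N - M) = r ^ N / r ^ M := by
        rw [eq_div_iff (by positivity), ← pow_add]
        congr 1; omega
      rw [hpow]
      field_simp
  · -- `x > 1`
    intro x hx1
    have hx0 : (0:ℝ) < x := by linarith
    set b : ℝ := 1 - 1 / x with hb
    have hb0 : 0 < b := by
      rw [hb, sub_pos, div_lt_one hx0]; linarith
    set r : ℝ := x * Real.exp (1 - x) with hr
    have hr0 : 0 < r := by rw [hr]; positivity
    have hr1 : r < 1 := by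
      have h2 : x < Real.exp (x - 1) := by
        have h := Real.add_one_lt_exp (x := x - 1) (by intro h; rw [sub_eq_zero] at h; linarith)
        linarith
      calc r = x * Real.exp (1 - x) := hr
        _ < Real.exp (x - 1) * Real.exp (1 - x) := mul_lt_mul_of_pos_right h2 (Real.exp_pos _)
        _ = 1 := by rw [← Real.exp_add]; norm_num
    refine squeeze_zero' (g := fun N : ℕ => r ^ N / b) ?_ ?_ ?_
    · filter_upwards with N
      apply div_nonneg ?_ (by positivity)
      apply MeasureTheory.setIntegral_nonneg measurableSet_Ioi
      intro u hu
      have h0u : (0:ℝ) ≤ u := le_trans (by positivity) (le_of_lt hu)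
      positivity
    · filter_upwards [eventually_ge_atTop 1] with N hN1
      set n : ℕ := N - M with hn
      set a : ℝ := (N:ℝ) * x with hadef
      have ha0 : 0 < a := by
        have hNpos : (0:ℝ) < (N:ℝ) := by exact_mod_cast hN1
        rw [hadef]; positivity
      have hpt : ∀ u ∈ Set.Ioi a, u ^ n * Real.exp (-u)
          ≤ ((n:ℝ) / Real.exp 1) ^ n * x ^ n * Real.exp (-(b * u)) := by
        intro u hu
        have hu0 : 0 ≤ u := le_trans ha0.le (le_of_lt hu)
        have h1 : (u / x) ^ n * Real.exp (-(u / x)) ≤ ((n:ℝ) / Real.exp 1) ^ n :=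
          ThetaAux.pow_mul_exp_neg_le n (by positivity)
        have hsplit : Real.exp (-u) = Real.exp (-(u / x)) * Real.exp (-(b * u)) := by
          rw [← Real.exp_add]; congr 1; rw [hb]; field_simp; ring
        have h2 : u ^ n = (u / x) ^ n * x ^ n := by
          rw [← mul_pow]; congr 1; field_simp
        rw [hsplit, h2]
        have h3 := mul_le_mul_of_nonneg_right h1 (Real.exp_pos (-(b*u))).le
        have h4 := mul_le_mul_of_nonneg_right h3 (pow_nonneg hx0.le n)
        calc (u / x) ^ n * x ^ n * (Real.exp (-(u / x)) * Real.exp (-(b * u)))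
            = (u / x) ^ n * Real.exp (-(u / x)) * Real.exp (-(b * u)) * x ^ n := by ring
          _ ≤ ((n:ℝ) / Real.exp 1) ^ n * Real.exp (-(b * u)) * x ^ n := h4
          _ = ((n:ℝ) / Real.exp 1) ^ n * x ^ n * Real.exp (-(b * u)) := by ring
      have hint1 : MeasureTheory.IntegrableOn (fun u : ℝ => u ^ n * Real.exp (-u))
          (Set.Ioi a) :=
        (ThetaAux.integrableOn_pow_mul_exp n).mono_set (Set.Ioi_subset_Ioi ha0.le)
      have hint2 : MeasureTheory.IntegrableOn
          (fun u : ℝ => ((n:ℝ) / Real.exp 1) ^ n * x ^ n * Real.exp (-(b * u)))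
          (Set.Ioi a) := by
        have h := exp_neg_integrableOn_Ioi a hb0
        have h2 : MeasureTheory.IntegrableOn (fun u : ℝ => Real.exp (-(b * u)))
            (Set.Ioi a) := by simpa [neg_mul] using h
        exact h2.const_mul (((n:ℝ) / Real.exp 1) ^ n * x ^ n)
      have hI : (∫ u in Set.Ioi a, u ^ n * Real.exp (-u))
          ≤ ((n:ℝ) / Real.exp 1) ^ n * x ^ n * (Real.exp (-(b * a)) / b) := by
        have h := MeasureTheory.setIntegral_mono_on hint1 hint2 measurableSet_Ioi hpt
        rwa [MeasureTheory.integral_const_mul, ThetaAux.integral_exp_neg_mul_Ioi hb0 a] at h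
      have hfac : (0:ℝ) < ((n)! : ℝ) := by positivity
      have hfacpow : ((n:ℝ) / Real.exp 1) ^ n ≤ ((n)! : ℝ) := by
        rw [div_pow, div_le_iff₀ (by positivity)]
        calc (n:ℝ) ^ n ≤ ((n)! : ℝ) * Real.exp n := ThetaAux.pow_le_factorial_mul_exp n
          _ = ((n)! : ℝ) * Real.exp 1 ^ n := by rw [← Real.exp_nat_mul, mul_one]
      have hstep : ThetaNM M N x ≤ x ^ n * (Real.exp (-(b * a)) / b) := by
        rw [ThetaNM, ← hn, ← hadef, div_le_iff₀ hfac]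
        refine hI.trans ?_
        have hx' : (0:ℝ) ≤ x ^ n * (Real.exp (-(b * a)) / b) := by positivity
        calc ((n:ℝ) / Real.exp 1) ^ n * x ^ n * (Real.exp (-(b * a)) / b)
            = ((n:ℝ) / Real.exp 1) ^ n * (x ^ n * (Real.exp (-(b * a)) / b)) := by ring
          _ ≤ ((n)! : ℝ) * (x ^ n * (Real.exp (-(b * a)) / b)) :=
              mul_le_mul_of_nonneg_right hfacpow hx'
          _ = x ^ n * (Real.exp (-(b * a)) / b) * ((n)! : ℝ) := by ring
      refine hstep.trans ?_
      have hexp : Real.exp (-(b * a)) = (Real.exp (1 - x)) ^ N := by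
        rw [← Real.exp_nat_mul]
        congr 1
        rw [hb, hadef]; field_simp; ring
      have hxn : x ^ n ≤ x ^ N := pow_le_pow_right₀ hx1.le (by omega)
      rw [hexp, hr, mul_pow, mul_div_assoc]
      gcongr
    · simpa using (tendsto_pow_atTop_nhds_zero_of_lt_one hr0.le hr1).div_const b
end
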